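/- Let m, n ∈ ℕ and let n₁, …, n_m be positive integers such that n − 1 = Σ_{i=1}^m (n_i − 1); let 1 ≤ q ≤ ∞. For each i ∈ {1, …, m} let Z_i, Y_i be Banach spaces and U_i a bounded linear operator from Z_i to Y_i. Let U : ℓ_∞^m({Z_i}) → ℓ_q^m({Y_i}) be the diagonal operator U(z₁, …, z_m) = (U₁(z₁), …, U_m(z_m)). Then e_n(U) ≤ (Σ_{i=1}^m e_{n_i}(U_i)^q)^{1/q} (with the right-hand side read as max_i e_{n_i}(U_i) when q = ∞). -/

import Mathlib

open Metric Set
open scoped ENNReal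

/-- The `n`-th (dyadic) entropy number of a bounded linear operator `T : X → Y`:
the infimum of all `ε > 0` such that the image of the closed unit ball of `X`
can be covered by `2 ^ (n - 1)` closed balls of radius `ε` in `Y`. -/
noncomputable def entropyNum {X Y : Type*} [NormedAddCommGroup X] [NormedSpace ℝ X]
    [NormedAddCommGroup Y] [NormedSpace ℝ Y] (n : ℕ) (T : X →L[ℝ] Y) : ℝ :=
  sInf {ε : ℝ | 0 < ε ∧ ∃ S : Finset Y, S.card ≤ 2 ^ (n - 1) ∧
    T '' closedBall 0 1 ⊆ ⋃ y ∈ S, closedBall y ε}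

/-- The `n`-th (dyadic) inner entropy number of a bounded linear operator `T : X → Y`:
the supremum of all `ε > 0` such that there are `2 ^ (n - 1) + 1` points in the closed
unit ball of `X` whose images under `T` are pairwise at distance at least `2 * ε`. -/
noncomputable def innerEntropyNum {X Y : Type*} [NormedAddCommGroup X] [NormedSpace ℝ X]
    [NormedAddCommGroup Y] [NormedSpace ℝ Y] (n : ℕ) (T : X →L[ℝ] Y) : ℝ :=
  sSup {ε : ℝ | 0 < ε ∧ ∃ x : Fin (2 ^ (n - 1) + 1) → X, (∀ i, ‖x i‖ ≤ 1) ∧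
    ∀ i j, i ≠ j → 2 * ε ≤ ‖T (x i) - T (x j)‖}

lemma entropyNum_nonneg' {X Y : Type*} [NormedAddCommGroup X] [NormedSpace ℝ X]
    [NormedAddCommGroup Y] [NormedSpace ℝ Y] (n : ℕ) (T : X →L[ℝ] Y) :
    0 ≤ entropyNum n T :=
  Real.sInf_nonneg fun _ hε => hε.1.le

lemma entropyNum_le_of_cover' {X Y : Type*} [NormedAddCommGroup X] [NormedSpace ℝ X]
    [NormedAddCommGroup Y] [NormedSpace ℝ Y] (n : ℕ) (T : X →L[ℝ] Y) {r : ℝ} (hr : 0 ≤ r)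
    (S : Finset Y) (hS : S.card ≤ 2 ^ (n - 1))
    (hcov : T '' closedBall 0 1 ⊆ ⋃ y ∈ S, closedBall y r) :
    entropyNum n T ≤ r := by
  refine le_of_forall_pos_le_add fun δ hδ => ?_
  refine csInf_le ⟨0, fun ε hε => hε.1.le⟩ ⟨by linarith, S, hS, hcov.trans ?_⟩
  exact Set.iUnion₂_mono fun y _ => closedBall_subset_closedBall (by linarith)

lemma exists_cover_lt' {X Y : Type*} [NormedAddCommGroup X] [NormedSpace ℝ X]
    [NormedAddCommGroup Y] [NormedSpace ℝ Y] (n : ℕ) (T : X →L[ℝ] Y) {δ : ℝ} (hδ : 0 < δ) :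
    ∃ ε : ℝ, 0 < ε ∧ ε < entropyNum n T + δ ∧ ∃ S : Finset Y, S.card ≤ 2 ^ (n - 1) ∧
      T '' closedBall 0 1 ⊆ ⋃ y ∈ S, closedBall y ε := by
  have hne : {ε : ℝ | 0 < ε ∧ ∃ S : Finset Y, S.card ≤ 2 ^ (n - 1) ∧
      T '' closedBall 0 1 ⊆ ⋃ y ∈ S, closedBall y ε}.Nonempty := by
    refine ⟨‖T‖ + 1, by positivity, {0}, by simpa using Nat.one_le_two_pow, ?_⟩
    rintro _ ⟨z, hz, rfl⟩
    rw [mem_closedBall_zero_iff] at hz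
    refine Set.mem_iUnion₂.2 ⟨0, Finset.mem_singleton_self 0, ?_⟩
    rw [mem_closedBall, dist_zero_right]
    calc ‖T z‖ ≤ ‖T‖ * ‖z‖ := T.le_opNorm z
      _ ≤ ‖T‖ * 1 := by gcongr
      _ ≤ ‖T‖ + 1 := by linarith [norm_nonneg T]
  obtain ⟨ε, ⟨hε0, S, hS, hcov⟩, hlt⟩ := Real.lt_sInf_add_pos hne hδ
  exact ⟨ε, hε0, hlt, S, hS, hcov⟩

/-- Lemma 2.4: if `n - 1 = Σᵢ (nᵢ - 1)` then the diagonal operator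
`U : ℓ_∞^m({Zᵢ}) → ℓ_q^m({Yᵢ})` satisfies `e_n(U) ≤ (Σᵢ e_{nᵢ}(Uᵢ)^q)^(1/q)`
(the right-hand side being `supᵢ e_{nᵢ}(Uᵢ)` when `q = ∞`). -/
theorem entropy_diagonal_sum (m n : ℕ) (hn : 1 ≤ n)
    (nn : Fin m → ℕ) (hnn : ∀ i, 1 ≤ nn i) (hsum : n - 1 = ∑ i, (nn i - 1))
    (q : ℝ≥0∞) [Fact (1 ≤ q)]
    (Z Y : Fin m → Type*)
    [∀ i, NormedAddCommGroup (Z i)] [∀ i, NormedSpace ℝ (Z i)]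
    [∀ i, NormedAddCommGroup (Y i)] [∀ i, NormedSpace ℝ (Y i)]
    (Ui : ∀ i, Z i →L[ℝ] Y i)
    (U : PiLp ⊤ Z →L[ℝ] PiLp q Y) (hU : ∀ z i, U z i = Ui i (z i)) :
    entropyNum n U ≤
      if q ≠ ⊤ then (∑ i, entropyNum (nn i) (Ui i) ^ q.toReal) ^ (1 / q.toReal)
      else ⨆ i, entropyNum (nn i) (Ui i) := by
  classical
  have hq1 : (1 : ℝ≥0∞) ≤ q := Fact.out
  set e : Fin m → ℝ := fun i => entropyNum (nn i) (Ui i) with he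
  have he0 : ∀ i, 0 ≤ e i := fun i => entropyNum_nonneg' _ _
  -- the case m = 0
  rcases Nat.eq_zero_or_pos m with hm | hm
  · subst hm
    haveI : Subsingleton (PiLp q Y) :=
      ⟨fun a b => (WithLp.equiv q _).injective (Subsingleton.elim _ _)⟩
    have h0 : entropyNum n U ≤ 0 := by
      refine entropyNum_le_of_cover' n U le_rfl {0} (by simpa using Nat.one_le_two_pow) ?_
      rintro _ ⟨z, _, rfl⟩
      refine Set.mem_iUnion₂.2 ⟨0, Finset.mem_singleton_self 0, ?_⟩
      rw [mem_closedBall, Subsingleton.elim (U z) 0, dist_self]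
    refine h0.trans ?_
    split_ifs with hq
    · exact Real.rpow_nonneg (Finset.sum_nonneg fun i _ => Real.rpow_nonneg (he0 i) _) _
    · simp [Real.iSup_of_isEmpty]
  haveI : Nonempty (Fin m) := ⟨⟨0, hm⟩⟩
  by_cases hq : q ≠ ⊤
  · -- finite q
    simp only [if_pos hq]
    have hp1 : 1 ≤ q.toReal := by
      rw [← ENNReal.toReal_one]
      exact ENNReal.toReal_mono hq hq1
    have hp0 : 0 < q.toReal := lt_of_lt_of_le one_pos hp1
    set p := q.toReal with hpdef
    set C : ℝ := (m : ℝ) ^ (1 / p) with hC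
    have hC0 : 0 ≤ C := Real.rpow_nonneg (Nat.cast_nonneg m) _
    refine le_of_forall_pos_le_add fun η hη => ?_
    set δ : ℝ := η / (C + 1) with hδdef
    have hδ : 0 < δ := div_pos hη (by linarith)
    choose ε hε0 hεlt S hScard hScov using fun i => exists_cover_lt' (nn i) (Ui i) hδ
    set r : ℝ := (∑ i, ε i ^ p) ^ (1 / p) with hr
    have hr0 : 0 ≤ r :=
      Real.rpow_nonneg (Finset.sum_nonneg fun i _ => Real.rpow_nonneg (hε0 i).le _) _
    have main : entropyNum n U ≤ r := by
      refine entropyNum_le_of_cover' n U hr0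
        ((Fintype.piFinset S).image (WithLp.equiv q _).symm) ?_ ?_
      · calc ((Fintype.piFinset S).image (WithLp.equiv q _).symm).card
            ≤ (Fintype.piFinset S).card := Finset.card_image_le
          _ = ∏ i, (S i).card := Fintype.card_piFinset S
          _ ≤ ∏ i, 2 ^ (nn i - 1) := Finset.prod_le_prod' fun i _ => hScard i
          _ = 2 ^ ∑ i, (nn i - 1) := Finset.prod_pow_eq_pow_sum _ _ _
          _ = 2 ^ (n - 1) := by rw [hsum]
      · rintro _ ⟨z, hz, rfl⟩
        rw [mem_closedBall_zero_iff] at hz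
        have hzi : ∀ i, ‖z i‖ ≤ 1 := by
          intro i
          refine le_trans ?_ hz
          rw [PiLp.norm_eq_ciSup]
          exact le_ciSup (f := fun j => ‖z j‖) (Set.Finite.bddAbove (Set.finite_range _)) i
        have hyi : ∀ i, ∃ y ∈ S i, Ui i (z i) ∈ closedBall y (ε i) := by
          intro i
          simpa using Set.mem_iUnion₂.1 (hScov i ⟨z i, mem_closedBall_zero_iff.2 (hzi i), rfl⟩)
        choose y hy hyd using hyi
        refine Set.mem_iUnion₂.2 ⟨(WithLp.equiv q _).symm y,
          Finset.mem_image_of_mem _ (Fintype.mem_piFinset.2 hy), ?_⟩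
        rw [mem_closedBall, dist_eq_norm, PiLp.norm_eq_sum hp0]
        refine Real.rpow_le_rpow (Finset.sum_nonneg fun i _ => Real.rpow_nonneg (norm_nonneg _) _)
          (Finset.sum_le_sum fun i _ => ?_) (by positivity)
        refine Real.rpow_le_rpow (norm_nonneg _) ?_ hp0.le
        have : (U z - (WithLp.equiv q _).symm y) i = Ui i (z i) - y i := by
          rw [PiLp.sub_apply, hU, WithLp.equiv_symm_apply, PiLp.toLp_apply]
        rw [this, ← dist_eq_norm]
        exact hyd i
    have mink : (∑ i, (e i + δ) ^ p) ^ (1 / p) ≤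
        (∑ i, e i ^ p) ^ (1 / p) + (∑ _i : Fin m, δ ^ p) ^ (1 / p) := by
      have h := Real.Lp_add_le (Finset.univ : Finset (Fin m)) e (fun _ => δ) hp1
      refine le_trans (le_of_eq ?_) (h.trans (le_of_eq ?_))
      · congr 1
        exact Finset.sum_congr rfl fun i _ => by
          rw [abs_of_nonneg (add_nonneg (he0 i) hδ.le)]
      · congr 2
        · exact Finset.sum_congr rfl fun i _ => by rw [abs_of_nonneg (he0 i)]
        · exact Finset.sum_congr rfl fun i _ => by rw [abs_of_nonneg hδ.le]
    have hsumδ : (∑ _i : Fin m, δ ^ p) ^ (1 / p) = C * δ := by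
      rw [Finset.sum_const, Finset.card_univ, Fintype.card_fin, nsmul_eq_mul,
        Real.mul_rpow (Nat.cast_nonneg m) (Real.rpow_nonneg hδ.le _),
        ← Real.rpow_mul hδ.le, mul_one_div_cancel hp0.ne', Real.rpow_one]
    have hCδ : C * δ ≤ η := by
      rw [hδdef]
      calc C * (η / (C + 1)) ≤ (C + 1) * (η / (C + 1)) := by
            have : 0 ≤ η / (C + 1) := le_of_lt hδ
            nlinarith
        _ = η := mul_div_cancel₀ η (by linarith)
    calc entropyNum n U ≤ r := main
      _ ≤ (∑ i, (e i + δ) ^ p) ^ (1 / p) := by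
          refine Real.rpow_le_rpow
            (Finset.sum_nonneg fun i _ => Real.rpow_nonneg (hε0 i).le _)
            (Finset.sum_le_sum fun i _ => ?_) (by positivity)
          exact Real.rpow_le_rpow (hε0 i).le (hεlt i).le hp0.le
      _ ≤ (∑ i, e i ^ p) ^ (1 / p) + (∑ _i : Fin m, δ ^ p) ^ (1 / p) := mink
      _ = (∑ i, e i ^ p) ^ (1 / p) + C * δ := by rw [hsumδ]
      _ ≤ (∑ i, e i ^ p) ^ (1 / p) + η := by linarith
  · -- q = ⊤
    rw [not_not] at hq
    subst hq
    simp only [ne_eq, not_true_eq_false, if_false]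
    refine le_of_forall_pos_le_add fun η hη => ?_
    choose ε hε0 hεlt S hScard hScov using fun i => exists_cover_lt' (nn i) (Ui i) hη
    set r : ℝ := ⨆ i, ε i with hr
    have hεbdd : BddAbove (Set.range ε) := Set.Finite.bddAbove (Set.finite_range ε)
    have hεler : ∀ i, ε i ≤ r := fun i => le_ciSup hεbdd i
    have hr0 : 0 ≤ r := le_trans (hε0 (Classical.arbitrary _)).le (hεler _)
    have main : entropyNum n U ≤ r := by
      refine entropyNum_le_of_cover' n U hr0
        ((Fintype.piFinset S).image (WithLp.equiv ⊤ _).symm) ?_ ?_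
      · calc ((Fintype.piFinset S).image (WithLp.equiv ⊤ _).symm).card
            ≤ (Fintype.piFinset S).card := Finset.card_image_le
          _ = ∏ i, (S i).card := Fintype.card_piFinset S
          _ ≤ ∏ i, 2 ^ (nn i - 1) := Finset.prod_le_prod' fun i _ => hScard i
          _ = 2 ^ ∑ i, (nn i - 1) := Finset.prod_pow_eq_pow_sum _ _ _
          _ = 2 ^ (n - 1) := by rw [hsum]
      · rintro _ ⟨z, hz, rfl⟩
        rw [mem_closedBall_zero_iff] at hz
        have hzi : ∀ i, ‖z i‖ ≤ 1 := by
          intro i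
          refine le_trans ?_ hz
          rw [PiLp.norm_eq_ciSup]
          exact le_ciSup (f := fun j => ‖z j‖) (Set.Finite.bddAbove (Set.finite_range _)) i
        have hyi : ∀ i, ∃ y ∈ S i, Ui i (z i) ∈ closedBall y (ε i) := by
          intro i
          simpa using Set.mem_iUnion₂.1 (hScov i ⟨z i, mem_closedBall_zero_iff.2 (hzi i), rfl⟩)
        choose y hy hyd using hyi
        refine Set.mem_iUnion₂.2 ⟨(WithLp.equiv ⊤ _).symm y,
          Finset.mem_image_of_mem _ (Fintype.mem_piFinset.2 hy), ?_⟩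
        rw [mem_closedBall, dist_eq_norm, PiLp.norm_eq_ciSup]
        refine ciSup_le fun i => ?_
        have : (U z - (WithLp.equiv ⊤ _).symm y) i = Ui i (z i) - y i := by
          rw [PiLp.sub_apply, hU, WithLp.equiv_symm_apply, PiLp.toLp_apply]
        rw [this, ← dist_eq_norm]
        exact le_trans (hyd i) (hεler i)
    refine main.trans (ciSup_le fun i => ?_)
    refine le_trans (hεlt i).le ?_
    have : e i ≤ ⨆ j, e j := le_ciSup (Set.Finite.bddAbove (Set.finite_range e)) i
    linarith
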